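/- Let K be an algebraically closed field and λ, ρ, ν ∈ K. The pair B_{ρ,λ} := (E_{21}+E_{32}, ρ(E_{21}+E_{32})+λE_{31}) degenerates to the pair E_ν := (E_{21}, νE_{21}) (i.e. E_ν lies in the Zariski closure of the GL_3(K)-orbit of B_{ρ,λ}) if and only if ν = ρ. -/

import Mathlib

open Matrix

/-- Evaluation of an element of the free algebra `K⟨x_1,…,x_m⟩` at a tuple of matrices. -/
noncomputable def evalTuple {K : Type*} [CommRing K] {n m : ℕ}
    (A : Fin m → Matrix (Fin n) (Fin n) K) :
    FreeAlgebra K (Fin m) →ₐ[K] Matrix (Fin n) (Fin n) K :=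
  FreeAlgebra.lift K A

/-- `φ(A)`: the `kn × ln` matrix obtained by substituting the tuple `A` into the
matrix `φ` over the free algebra. -/
noncomputable def phiEval {K : Type*} [CommRing K] {n m k l : ℕ}
    (A : Fin m → Matrix (Fin n) (Fin n) K)
    (φ : Matrix (Fin k) (Fin l) (FreeAlgebra K (Fin m))) :
    Matrix (Fin k × Fin n) (Fin l × Fin n) K :=
  fun p q => evalTuple A (φ p.1 q.1) p.2 q.2

/-- The hom-preorder `A ≤hom B`: `rk φ(A) ≥ rk φ(B)` for all matrices `φ`
over the free algebra. -/
def homLE {K : Type*} [Field K] {n m : ℕ} (A B : Fin m → Matrix (Fin n) (Fin n) K) : Prop :=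
  ∀ (k l : ℕ) (φ : Matrix (Fin k) (Fin l) (FreeAlgebra K (Fin m))),
    (phiEval B φ).rank ≤ (phiEval A φ).rank

/-- The orbit of a matrix tuple under simultaneous conjugation by `GL_n(K)`. -/
def simOrbit {K : Type*} [Field K] {n m : ℕ} (A : Fin m → Matrix (Fin n) (Fin n) K) :
    Set (Fin m → Matrix (Fin n) (Fin n) K) :=
  {B | ∃ g : GL (Fin n) K, ∀ i,
    B i = (g : Matrix (Fin n) (Fin n) K) * A i * ((g⁻¹ : GL (Fin n) K) : Matrix (Fin n) (Fin n) K)}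

/-- Membership in the Zariski closure of a subset of the affine space of matrix tuples:
every polynomial function vanishing on the set vanishes at the given point. -/
def inZariskiClosure {K : Type*} [Field K] {n m : ℕ}
    (S : Set (Fin m → Matrix (Fin n) (Fin n) K)) (B : Fin m → Matrix (Fin n) (Fin n) K) : Prop :=
  ∀ p : MvPolynomial (Fin m × Fin n × Fin n) K,
    (∀ C ∈ S, MvPolynomial.eval (fun q => C q.1 q.2.1 q.2.2) p = 0) →
    MvPolynomial.eval (fun q => B q.1 q.2.1 q.2.2) p = 0

/-- The degeneration preorder: `A ≤deg B` iff `B` lies in the Zariski closure of the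
`GL_n(K)`-orbit of `A`. -/
def degLE {K : Type*} [Field K] {n m : ℕ} (A B : Fin m → Matrix (Fin n) (Fin n) K) : Prop :=
  inZariskiClosure (simOrbit A) B

/-- A tuple of matrices is nilpotent if its components generate a nilpotent
(non-unital) subalgebra of the matrix algebra. -/
def IsNilpotentTuple {K : Type*} [Field K] {n m : ℕ}
    (A : Fin m → Matrix (Fin n) (Fin n) K) : Prop :=
  ∃ N : ℕ, ∀ f : Fin N → Matrix (Fin n) (Fin n) K,
    (∀ i, f i ∈ NonUnitalAlgebra.adjoin K (Set.range A)) → (List.ofFn f).prod = 0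

/-- The `3×3` matrix unit `E_{ij}` (with `0`-indexed positions: `E_{21} = Eu 1 0`, etc.). -/
def Eu {K : Type*} [Field K] (i j : Fin 3) : Matrix (Fin 3) (Fin 3) K :=
  Matrix.single i j 1

/-- A `3×3` matrix is strictly lower triangular. -/
def StrictLower {K : Type*} [Field K] (X : Matrix (Fin 3) (Fin 3) K) : Prop :=
  ∀ i j : Fin 3, i ≤ j → X i j = 0

section Aux

set_option maxHeartbeats 1000000
set_option synthInstance.maxHeartbeats 200000

variable {K : Type*} [Field K]

/-- The relation `B₂ - ρ B₁ - λ B₁² = 0` satisfied by the pair `B_{ρ,λ}`. -/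
lemma B_relation (ρ l : K) :
    (ρ • (Eu 1 0 + Eu 2 1) + l • Eu 2 0 : Matrix (Fin 3) (Fin 3) K)
      - ρ • (Eu 1 0 + Eu 2 1)
      - l • ((Eu 1 0 + Eu 2 1) * (Eu 1 0 + Eu 2 1)) = 0 := by
  ext a b
  fin_cases a <;> fin_cases b <;>
    simp [Eu, Matrix.single, Matrix.add_apply, Matrix.sub_apply, Matrix.smul_apply,
      Matrix.mul_apply, Fin.sum_univ_three]

lemma conj_first (t : K) :
    (Matrix.diagonal ![1,1,t]) * (Eu 1 0 + Eu 2 1 : Matrix (Fin 3) (Fin 3) K) *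
      (Matrix.diagonal ![1,1,t⁻¹]) = Eu 1 0 + t • Eu 2 1 := by
  ext a b
  fin_cases a <;> fin_cases b <;>
    simp [Eu, Matrix.single, Matrix.add_apply, Matrix.smul_apply,
      Matrix.mul_apply, Fin.sum_univ_three, Matrix.diagonal]

lemma conj_second (ρ l t : K) :
    (Matrix.diagonal ![1,1,t]) * (ρ • (Eu 1 0 + Eu 2 1) + l • Eu 2 0 : Matrix (Fin 3) (Fin 3) K) *
      (Matrix.diagonal ![1,1,t⁻¹]) = ρ • Eu 1 0 + t • (ρ • Eu 2 1 + l • Eu 2 0) := by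
  ext a b
  fin_cases a <;> fin_cases b <;>
    simp [Eu, Matrix.single, Matrix.add_apply, Matrix.smul_apply,
      Matrix.mul_apply, Fin.sum_univ_three, Matrix.diagonal, mul_comm]

/-- Commutation of `Polynomial.eval` with `MvPolynomial.aeval` into polynomials. -/
lemma eval_aeval_poly {σ : Type*} (f : σ → Polynomial K) (p : MvPolynomial σ K) (t : K) :
    (MvPolynomial.aeval f p).eval t = MvPolynomial.eval (fun i => (f i).eval t) p := by
  induction p using MvPolynomial.induction_on with
  | C a => simp
  | add p q hp hq => simp [hp, hq]
  | mul_X p i hp => simp [hp]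

/-- The witness polynomial `(X₂ - ρ X₁ - λ X₁²)_{(1,0)}`. -/
noncomputable def wit (ρ l : K) : MvPolynomial (Fin 2 × Fin 3 × Fin 3) K :=
  MvPolynomial.X (1, 1, 0) - MvPolynomial.C ρ * MvPolynomial.X (0, 1, 0)
    - MvPolynomial.C l * ∑ k : Fin 3, MvPolynomial.X (0, 1, k) * MvPolynomial.X (0, k, 0)

lemma wit_eval (ρ l : K) (C : Fin 2 → Matrix (Fin 3) (Fin 3) K) :
    MvPolynomial.eval (fun q => C q.1 q.2.1 q.2.2) (wit ρ l)
      = (C 1 - ρ • C 0 - l • (C 0 * C 0)) 1 0 := by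
  simp [wit, Matrix.sub_apply, Matrix.smul_apply, Matrix.mul_apply, Finset.mul_sum]

end Aux

/-- `B_{ρ,λ} = (E_{21}+E_{32}, ρ(E_{21}+E_{32})+λE_{31})` degenerates to
`E_ν = (E_{21}, νE_{21})` if and only if `ν = ρ`. -/
theorem B_degenerates_to_E_iff {K : Type*} [Field K] [IsAlgClosed K] (ρ l ν : K) :
    degLE (![Eu 1 0 + Eu 2 1, ρ • (Eu 1 0 + Eu 2 1) + l • Eu 2 0] :
        Fin 2 → Matrix (Fin 3) (Fin 3) K)
      ![Eu 1 0, ν • Eu 1 0] ↔ ν = ρ := by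
  set B0 : Matrix (Fin 3) (Fin 3) K := Eu 1 0 + Eu 2 1 with hB0
  set B1 : Matrix (Fin 3) (Fin 3) K := ρ • (Eu 1 0 + Eu 2 1) + l • Eu 2 0 with hB1
  constructor
  · -- degeneration implies ν = ρ
    intro h
    have hv := h (wit ρ l) ?_
    · -- evaluate at E_ν
      rw [wit_eval] at hv
      simp [Eu, Matrix.single, Matrix.sub_apply, Matrix.smul_apply,
        Matrix.mul_apply, Fin.sum_univ_three, sub_eq_zero] at hv
      exact hv
    · -- wit vanishes on the orbit
      rintro C ⟨g, hg⟩
      rw [wit_eval]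
      have e0 := hg 0
      have e1 := hg 1
      simp only [Matrix.cons_val_zero, Matrix.cons_val_one, Matrix.head_cons] at e0 e1
      set G : Matrix (Fin 3) (Fin 3) K := (g : Matrix (Fin 3) (Fin 3) K)
      set Gi : Matrix (Fin 3) (Fin 3) K := ((g⁻¹ : GL (Fin 3) K) : Matrix (Fin 3) (Fin 3) K)
      have hGi : Gi * G = 1 := g.inv_mul
      have key : C 1 - ρ • C 0 - l • (C 0 * C 0) = G * (B1 - ρ • B0 - l • (B0 * B0)) * Gi := by
        rw [e0, e1]
        have h2 : (G * B0 * Gi) * (G * B0 * Gi) = G * (B0 * B0) * Gi := by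
          calc (G * B0 * Gi) * (G * B0 * Gi) = G * B0 * (Gi * G) * B0 * Gi := by
                noncomm_ring
            _ = G * (B0 * B0) * Gi := by rw [hGi]; noncomm_ring
        rw [h2]
        simp [Matrix.mul_sub, Matrix.sub_mul, Matrix.mul_smul, Matrix.smul_mul]
      rw [key]
      have : B1 - ρ • B0 - l • (B0 * B0) = 0 := B_relation ρ l
      rw [this, Matrix.mul_zero, Matrix.zero_mul]
      simp
  · -- ν = ρ implies degeneration
    rintro rfl
    intro p hp
    -- the curve of conjugates, as polynomials in t
    set A0 : Fin 2 → Matrix (Fin 3) (Fin 3) K := ![Eu 1 0, ν • Eu 1 0] with hA0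
    set D : Fin 2 → Matrix (Fin 3) (Fin 3) K := ![Eu 2 1, ν • Eu 2 1 + l • Eu 2 0] with hD
    set f : Fin 2 × Fin 3 × Fin 3 → Polynomial K :=
      fun q => Polynomial.C (A0 q.1 q.2.1 q.2.2) + Polynomial.C (D q.1 q.2.1 q.2.2) * Polynomial.X
      with hf
    set q : Polynomial K := MvPolynomial.aeval f p with hq
    have curve_mem : ∀ t : K, t ≠ 0 →
        (fun i => A0 i + t • D i) ∈ simOrbit ![B0, B1] := by
      intro t ht
      refine ⟨⟨Matrix.diagonal ![1,1,t], Matrix.diagonal ![1,1,t⁻¹], ?_, ?_⟩, ?_⟩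
      · rw [Matrix.diagonal_mul_diagonal]
        ext a b
        fin_cases a <;> fin_cases b <;>
          simp [Matrix.diagonal_apply, Matrix.one_apply, mul_inv_cancel₀ ht]
      · rw [Matrix.diagonal_mul_diagonal]
        ext a b
        fin_cases a <;> fin_cases b <;>
          simp [Matrix.diagonal_apply, Matrix.one_apply, inv_mul_cancel₀ ht]
      · intro i
        fin_cases i
        · show A0 0 + t • D 0 = Matrix.diagonal ![1,1,t] * B0 * Matrix.diagonal ![1,1,t⁻¹]
          rw [hB0, conj_first]
          simp [hA0, hD]
        · show A0 1 + t • D 1 = Matrix.diagonal ![1,1,t] * B1 * Matrix.diagonal ![1,1,t⁻¹]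
          rw [hB1, conj_second]
          simp [hA0, hD]
    have hroot : ∀ t : K, t ≠ 0 → q.eval t = 0 := by
      intro t ht
      rw [hq, eval_aeval_poly]
      have hthis := hp _ (curve_mem t ht)
      have hfun : (fun i => Polynomial.eval t (f i))
          = (fun q : Fin 2 × Fin 3 × Fin 3 => (A0 q.1 + t • D q.1) q.2.1 q.2.2) := by
        funext idx
        simp only [hf, Polynomial.eval_add, Polynomial.eval_mul, Polynomial.eval_C,
          Polynomial.eval_X, Matrix.add_apply, Matrix.smul_apply, smul_eq_mul]
        ring
      rw [hfun]
      exact hthis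
    have hq0 : q = 0 := by
      apply Polynomial.eq_zero_of_infinite_isRoot
      refine Set.Infinite.mono ?_ ((Set.finite_singleton (0:K)).infinite_compl)
      intro x hx
      exact hroot x (by simpa using hx)
    have hz := congrArg (Polynomial.eval (0:K)) hq0
    rw [hq, eval_aeval_poly] at hz
    simp only [Polynomial.eval_zero] at hz
    have hfun0 : (fun q : Fin 2 × Fin 3 × Fin 3 => A0 q.1 q.2.1 q.2.2)
        = (fun i => Polynomial.eval 0 (f i)) := by
      funext idx
      simp only [hf, Polynomial.eval_add, Polynomial.eval_mul, Polynomial.eval_C,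
        Polynomial.eval_X, mul_zero, add_zero]
    show MvPolynomial.eval (fun q : Fin 2 × Fin 3 × Fin 3 => A0 q.1 q.2.1 q.2.2) p = 0
    rw [hfun0]
    exact hz
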